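/- Let (Ω, F, P) be a probability space satisfying the hypotheses below. Then lim_{|x| → ∞} liminf_{n → ∞} (1/n) · #{ k ∈ {1, …, n} : E[t((k−1)x)] ≤ E[t(kx)] } = 1, where the limit as |x| → ∞ is along the cofinite filter on ℤ^d (i.e. for every ε > 0 there is R such that liminf_{n → ∞} (1/n) · #{ k ∈ {1, …, n} : E[t((k−1)x)] ≤ E[t(kx)] } > 1 − ε whenever |x| ≥ R). (This is the second statement of Theorem 1.1, Uniformity of hitting times, stated with all properties of the contact process hitting times that the proof uses carried as explicit hypotheses.) -/

import Mathlib

open MeasureTheory Filter Finset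

/-- The 1-norm of a point of `ℤ^d`. -/
def onorm {d : ℕ} (x : Fin d → ℤ) : ℕ := ∑ i, (x i).natAbs

/-- First statement of Theorem 1.1 (Uniformity of hitting times):
`lim_{|x|→∞} liminf_{n→∞} (1/n) ∑_{k=1}^n P(t((k-1)x) ≤ t(kx)) = 1`,
the limit in `x` being along the cofinite filter on `ℤ^d`. -/
theorem stmt_1
    {Ω : Type*} [MeasurableSpace Ω] (P : Measure Ω) [IsProbabilityMeasure P]
    (d : ℕ) (hd : 1 ≤ d)
    (t σ : (Fin d → ℤ) → Ω → ℝ)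
    (ht_meas : ∀ x, Measurable (t x)) (hσ_meas : ∀ x, Measurable (σ x))
    (ht_nonneg : ∀ x ω, 0 ≤ t x ω) (hσ_nonneg : ∀ x ω, 0 ≤ σ x ω)
    (ht_int : ∀ x, Integrable (t x) P) (hσ_int : ∀ x, Integrable (σ x) P)
    -- (i) the renewal bound of Lemma 3.1
    (hrenewal : ∀ x y, ∫ ω in {ω | σ y ω ≤ t x ω}, (t x ω - σ y ω) ∂P
      ≤ (P {ω | σ y ω ≤ t x ω}).toReal * ∫ ω, t (x - y) ω ∂P)
    -- (ii) t ≤ σ a.s. and uniform bound on E[σ - t]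
    (htσ : ∀ y, ∀ᵐ ω ∂P, t y ω ≤ σ y ω)
    (C₁ : ℝ) (hC₁ : ∀ y, ∫ ω, (σ y ω - t y ω) ∂P ≤ C₁)
    -- (iii) normalized expected hitting times converge
    (μ : (Fin d → ℤ) → ℝ) (hμ_nonneg : ∀ x, 0 ≤ μ x)
    (hμ : ∀ x, Tendsto (fun n : ℕ => (∫ ω, t (n • x) ω ∂P) / n) atTop (nhds (μ x)))
    -- (iv) the shape theorem (Lemma 3.2)
    (hμ_inf : Tendsto μ cofinite atTop)
    (hshape : Tendsto (fun x => (∫ ω, t x ω ∂P) / μ x) cofinite (nhds 1)) :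
    Tendsto (fun x : Fin d → ℤ => liminf (fun n : ℕ =>
        (1 / (n : ℝ)) * ((Finset.Icc 1 n).filter (fun k =>
          ∫ ω, t ((k - 1) • x) ω ∂P ≤ ∫ ω, t (k • x) ω ∂P)).card) atTop)
      cofinite (nhds 1) := by
  classical
  -- E[t] is nonnegative
  have hEt_nonneg : ∀ x, 0 ≤ ∫ ω, t x ω ∂P := fun x =>
    integral_nonneg (fun ω => ht_nonneg x ω)
  -- C₁ ≥ 0
  have hC₁0 : 0 ≤ C₁ := by
    refine le_trans ?_ (hC₁ 0)
    exact integral_nonneg_of_ae ((htσ 0).mono fun ω h => sub_nonneg.2 h)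
  -- the key renewal inequality on expectations
  have key : ∀ (x y : Fin d → ℤ),
      ∫ ω, t x ω ∂P ≤ (∫ ω, σ y ω ∂P) + ∫ ω, t (x - y) ω ∂P := by
    intro x y
    set S : Set Ω := {ω | σ y ω ≤ t x ω} with hS
    have hSm : MeasurableSet S := measurableSet_le (hσ_meas y) (ht_meas x)
    have hint : Integrable (fun ω => t x ω - σ y ω) P := (ht_int x).sub (hσ_int y)
    have hsplit : (∫ ω in S, (t x ω - σ y ω) ∂P) + ∫ ω in Sᶜ, (t x ω - σ y ω) ∂P
        = ∫ ω, (t x ω - σ y ω) ∂P := integral_add_compl hSm hint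
    have hcompl : ∫ ω in Sᶜ, (t x ω - σ y ω) ∂P ≤ 0 := by
      refine setIntegral_nonpos hSm.compl fun ω hω => ?_
      have : ¬ (σ y ω ≤ t x ω) := hω
      linarith [lt_of_not_ge this]
    have hP1 : (P S).toReal ≤ 1 := by
      simpa using ENNReal.toReal_mono ENNReal.one_ne_top (prob_le_one (μ := P) (s := S))
    have hset : ∫ ω in S, (t x ω - σ y ω) ∂P ≤ ∫ ω, t (x - y) ω ∂P := by
      refine (hrenewal x y).trans ?_
      calc (P S).toReal * ∫ ω, t (x - y) ω ∂P
          ≤ 1 * ∫ ω, t (x - y) ω ∂P :=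
            mul_le_mul_of_nonneg_right hP1 (hEt_nonneg _)
        _ = ∫ ω, t (x - y) ω ∂P := one_mul _
    rw [integral_sub (ht_int x) (hσ_int y)] at hsplit
    linarith
  have key2 : ∀ y, ∫ ω, σ y ω ∂P ≤ (∫ ω, t y ω ∂P) + C₁ := by
    intro y
    have h := hC₁ y
    rw [integral_sub (hσ_int y) (ht_int y)] at h
    linarith
  -- per-x notation
  set f : (Fin d → ℤ) → ℕ → ℝ := fun x n =>
      (1 / (n : ℝ)) * ((Finset.Icc 1 n).filter (fun k =>
        ∫ ω, t ((k - 1) • x) ω ∂P ≤ ∫ ω, t (k • x) ω ∂P)).card with hf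
  -- f is in [0,1]
  have hf_nonneg : ∀ x n, 0 ≤ f x n := by
    intro x n
    apply mul_nonneg (by positivity) (Nat.cast_nonneg _)
  have hf_le_one : ∀ x n, f x n ≤ 1 := by
    intro x n
    rcases Nat.eq_zero_or_pos n with h | h
    · subst h; simp [hf]
    · have hcard : (((Finset.Icc 1 n).filter (fun k =>
          ∫ ω, t ((k - 1) • x) ω ∂P ≤ ∫ ω, t (k • x) ω ∂P)).card : ℝ) ≤ n := by
        have := Finset.card_filter_le (Finset.Icc 1 n) (fun k =>
          ∫ ω, t ((k - 1) • x) ω ∂P ≤ ∫ ω, t (k • x) ω ∂P)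
        have h2 : (Finset.Icc 1 n).card = n := by simp
        exact_mod_cast (h2 ▸ this)
      have hn : (0 : ℝ) < n := by exact_mod_cast h
      rw [hf]
      calc (1 / (n : ℝ)) * _ ≤ (1 / (n : ℝ)) * n :=
            mul_le_mul_of_nonneg_left hcard (by positivity)
        _ = 1 := by field_simp
  -- liminf of f ≤ 1 always
  have hliminf_le : ∀ x, liminf (f x) atTop ≤ 1 := by
    intro x
    have : liminf (f x) atTop ≤ liminf (fun _ : ℕ => (1:ℝ)) atTop := by
      refine liminf_le_liminf (Eventually.of_forall (hf_le_one x)) ?_ ?_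
      · exact isBoundedUnder_of ⟨0, fun n => hf_nonneg x n⟩
      · exact (isBoundedUnder_of ⟨1, fun _ : ℕ => le_refl (1:ℝ)⟩).isCoboundedUnder_ge
    simpa using this
  -- the main counting bound, per x
  have hcount : ∀ (x : Fin d → ℤ) (n : ℕ),
      ∫ ω, t (n • x) ω ∂P ≤ (∫ ω, t ((0:ℕ) • x) ω ∂P)
        + (((Finset.Icc 1 n).filter (fun k =>
            ∫ ω, t ((k - 1) • x) ω ∂P ≤ ∫ ω, t (k • x) ω ∂P)).card : ℝ)
          * (C₁ + ∫ ω, t x ω ∂P) := by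
    intro x n
    set M : ℝ := C₁ + ∫ ω, t x ω ∂P with hM
    have hM0 : 0 ≤ M := add_nonneg hC₁0 (hEt_nonneg x)
    set p : ℕ → Prop := fun k => ∫ ω, t ((k - 1) • x) ω ∂P ≤ ∫ ω, t (k • x) ω ∂P with hp
    -- step bound: a (k+1) ≤ a k + M
    have hstep : ∀ k : ℕ, ∫ ω, t ((k+1) • x) ω ∂P ≤ (∫ ω, t (k • x) ω ∂P) + M := by
      intro k
      have hdiff : (k+1) • x - k • x = x := by
        rw [succ_nsmul]; abel
      have h1 := key ((k+1) • x) (k • x)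
      rw [hdiff] at h1
      have h2 := key2 (k • x)
      rw [hM]; linarith
    induction n with
    | zero => simp
    | succ n ih =>
      have hnot : (n+1) ∉ Finset.Icc 1 n := by simp
      have hins : Finset.Icc 1 (n+1) = insert (n+1) (Finset.Icc 1 n) := by
        ext k
        simp only [Finset.mem_Icc, Finset.mem_insert]
        omega
      by_cases hpn : p (n+1)
      · have hcards : ((Finset.Icc 1 (n+1)).filter p).card
            = ((Finset.Icc 1 n).filter p).card + 1 := by
          rw [hins, Finset.filter_insert, if_pos hpn,
            Finset.card_insert_of_notMem (fun h => hnot (Finset.mem_of_mem_filter _ h))]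
        rw [hcards]
        push_cast
        have := hstep n
        nlinarith [ih, hstep n, hM0]
      · have hcards : ((Finset.Icc 1 (n+1)).filter p).card
            = ((Finset.Icc 1 n).filter p).card := by
          rw [hins, Finset.filter_insert, if_neg hpn]
        rw [hcards]
        have hlt : ∫ ω, t ((n+1) • x) ω ∂P ≤ ∫ ω, t (n • x) ω ∂P := by
          have : ¬ (∫ ω, t (((n+1) - 1) • x) ω ∂P ≤ ∫ ω, t ((n+1) • x) ω ∂P) := hpn
          simp only [Nat.add_sub_cancel] at this
          linarith [lt_of_not_ge this]
        linarith [ih]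
  -- lower bound on liminf when M > 0
  have hliminf_ge : ∀ x : Fin d → ℤ, 0 < C₁ + ∫ ω, t x ω ∂P →
      μ x / (C₁ + ∫ ω, t x ω ∂P) ≤ liminf (f x) atTop := by
    intro x hMpos
    set M : ℝ := C₁ + ∫ ω, t x ω ∂P with hM
    set r : ℕ → ℝ := fun n => ((∫ ω, t (n • x) ω ∂P) / n
      - (∫ ω, t ((0:ℕ) • x) ω ∂P) / n) / M with hr
    have hrf : ∀ n : ℕ, 1 ≤ n → r n ≤ f x n := by
      intro n hn
      have hn0 : (0 : ℝ) < n := by exact_mod_cast hn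
      have hn' : (n : ℝ) ≠ 0 := ne_of_gt hn0
      set G : ℝ := (((Finset.Icc 1 n).filter (fun k =>
          ∫ ω, t ((k - 1) • x) ω ∂P ≤ ∫ ω, t (k • x) ω ∂P)).card : ℝ) with hG
      have h := hcount x n
      rw [← hG, ← hM] at h
      rw [hr, hf, div_le_iff₀ hMpos, ← sub_div, div_le_iff₀ hn0]
      have hrw : (1 / (n:ℝ)) * G * M * n = G * M := by field_simp
      rw [hrw]
      linarith
    have hrlim : Tendsto r atTop (nhds (μ x / M)) := by
      have h1 : Tendsto (fun n : ℕ => (∫ ω, t (n • x) ω ∂P) / n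
          - (∫ ω, t ((0:ℕ) • x) ω ∂P) / n) atTop (nhds (μ x - 0)) :=
        (hμ x).sub (tendsto_const_div_atTop_nhds_zero_nat _)
      have h2 := h1.div_const M
      rw [sub_zero] at h2
      exact h2
    have : liminf r atTop ≤ liminf (f x) atTop := by
      refine liminf_le_liminf (eventually_atTop.2 ⟨1, hrf⟩) ?_ ?_
      · exact hrlim.isBoundedUnder_ge
      · exact (isBoundedUnder_of ⟨1, fun n => hf_le_one x n⟩).isCoboundedUnder_ge
    rwa [hrlim.liminf_eq] at this
  -- the ratio tends to 1 along cofinite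
  have hratio : Tendsto (fun x => μ x / (C₁ + ∫ ω, t x ω ∂P)) cofinite (nhds 1) := by
    have h1 : Tendsto (fun x => C₁ / μ x + (∫ ω, t x ω ∂P) / μ x) cofinite (nhds (0 + 1)) :=
      (Tendsto.div_atTop tendsto_const_nhds hμ_inf).add hshape
    have h2 : Tendsto (fun x => (C₁ / μ x + (∫ ω, t x ω ∂P) / μ x)⁻¹) cofinite
        (nhds ((0 + 1)⁻¹)) := h1.inv₀ (by norm_num)
    have heq : ∀ᶠ x in cofinite, (C₁ / μ x + (∫ ω, t x ω ∂P) / μ x)⁻¹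
        = μ x / (C₁ + ∫ ω, t x ω ∂P) := by
      filter_upwards [hμ_inf.eventually_ge_atTop 1] with x hx1
      rw [← add_div, inv_div]
    have := h2.congr' heq
    simpa using this
  -- conclude by squeezing
  have hev : ∀ᶠ x in cofinite, μ x / (C₁ + ∫ ω, t x ω ∂P) ≤ liminf (f x) atTop := by
    filter_upwards [hμ_inf.eventually_ge_atTop 1,
      hshape.eventually (eventually_ge_nhds (by norm_num : (1:ℝ)/2 < 1))] with x hx1 hx2
    have hμ0 : (0:ℝ) < μ x := lt_of_lt_of_le one_pos hx1
    have hEt : (1:ℝ)/2 * μ x ≤ ∫ ω, t x ω ∂P := by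
      have h2 := hx2
      rw [le_div_iff₀ hμ0] at h2
      linarith
    have hMpos : 0 < C₁ + ∫ ω, t x ω ∂P := by nlinarith
    exact hliminf_ge x hMpos
  exact tendsto_of_tendsto_of_tendsto_of_le_of_le' hratio tendsto_const_nhds hev
    (Eventually.of_forall hliminf_le)
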